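/- Let h(p) = (2/5)(1-p)(2 + A(p)·p) and g(p) = (1/3)(1-p)(1 + (1-p)^3 + B(p)·p) with A, B as defined above. Then there exists p* ∈ (0,1) such that h(p) > g(p) for all p ∈ (0, p*) and g(p) > h(p) for all p ∈ (p*, 1). -/

import Mathlib

noncomputable def A (p : ℝ) : ℝ := p + 1 - (1-p)^2 * (1 - p*(1-p)) - (1/2) * p * (1-p)

noncomputable def B (p : ℝ) : ℝ :=
  3 + (1+(1-p)^3)*(1-(1-p)^2+p*(1-p)^3) + p*(1+(1-p)^2)

noncomputable def h (p : ℝ) : ℝ := (2/5) * (1-p) * (2 + A p * p)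

noncomputable def g (p : ℝ) : ℝ := (1/3) * (1-p) * (1 + (1-p)^3 + B p * p)

noncomputable def Qc (p : ℝ) : ℝ :=
  2 - 34*p^2 + 79*p^3 - 122*p^4 + 124*p^5 - 80*p^6 + 30*p^7 - 5*p^8

lemma hg_eq (p : ℝ) : h p - g p = (1-p) * Qc p / 15 := by
  unfold h g A B Qc; ring

lemma Qc_hasDeriv (x : ℝ) :
    HasDerivAt Qc (-68*x + 237*x^2 - 488*x^3 + 620*x^4 - 480*x^5 + 210*x^6 - 40*x^7) x := by
  have h := (((((((hasDerivAt_const x (2:ℝ)).sub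
    ((hasDerivAt_pow 2 x).const_mul (34:ℝ))).add
    ((hasDerivAt_pow 3 x).const_mul (79:ℝ))).sub
    ((hasDerivAt_pow 4 x).const_mul (122:ℝ))).add
    ((hasDerivAt_pow 5 x).const_mul (124:ℝ))).sub
    ((hasDerivAt_pow 6 x).const_mul (80:ℝ))).add
    ((hasDerivAt_pow 7 x).const_mul (30:ℝ))).sub
    ((hasDerivAt_pow 8 x).const_mul (5:ℝ))
  convert h using 1
  · rfl
  · rfl
  · funext y; simp only [Qc, Pi.add_apply, Pi.sub_apply]
  · norm_num; ring

lemma Qc_anti : StrictAntiOn Qc (Set.Icc (0:ℝ) 1) := by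
  apply strictAntiOn_of_deriv_neg (convex_Icc 0 1)
  · exact fun x _ => (Qc_hasDeriv x).continuousAt.continuousWithinAt
  · intro x hx
    rw [interior_Icc] at hx
    obtain ⟨hx0, hx1⟩ := hx
    rw [(Qc_hasDeriv x).deriv]
    have ht : (0:ℝ) < 1 - x := by linarith
    have h1 : (0:ℝ) < 3 - 3*(1-x) + 4*(1-x)^2 := by nlinarith [sq_nonneg (1-x-3/8)]
    have h2 : (0:ℝ) < (1-x)^4 * (3 - 3*(1-x) + 4*(1-x)^2) := mul_pos (pow_pos ht 4) h1
    nlinarith [mul_pos hx0 h2, mul_pos hx0 ht, mul_pos hx0 (mul_pos ht ht)]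

theorem crossover_exists :
    ∃ pstar : ℝ, 0 < pstar ∧ pstar < 1 ∧
      (∀ p : ℝ, 0 < p → p < pstar → h p > g p) ∧
      (∀ p : ℝ, pstar < p → p < 1 → g p > h p) := by
  have hc : ContinuousOn Qc (Set.Icc (0:ℝ) 1) :=
    fun x _ => (Qc_hasDeriv x).continuousAt.continuousWithinAt
  have hQ0 : Qc 0 = 2 := by unfold Qc; norm_num
  have hQ1 : Qc 1 = -6 := by unfold Qc; norm_num
  have hmem : (0:ℝ) ∈ Set.Icc (Qc 1) (Qc 0) := by
    rw [hQ0, hQ1]; constructor <;> norm_num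
  obtain ⟨pstar, hps, hQps⟩ := intermediate_value_Icc' (by norm_num : (0:ℝ) ≤ 1) hc hmem
  have hps0 : 0 < pstar := by
    rcases lt_or_eq_of_le hps.1 with h' | h'
    · exact h'
    · exfalso; rw [← h', hQ0] at hQps; norm_num at hQps
  have hps1 : pstar < 1 := by
    rcases lt_or_eq_of_le hps.2 with h' | h'
    · exact h'
    · exfalso; rw [h', hQ1] at hQps; norm_num at hQps
  refine ⟨pstar, hps0, hps1, ?_, ?_⟩
  · intro p hp0 hpps
    have hpmem : p ∈ Set.Icc (0:ℝ) 1 := ⟨le_of_lt hp0, by linarith⟩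
    have hQp : 0 < Qc p := by
      have := Qc_anti hpmem hps hpps
      rw [hQps] at this; linarith
    have h1p : 0 < 1 - p := by linarith
    have := mul_pos h1p hQp
    have := hg_eq p
    linarith
  · intro p hpps hp1
    have hpmem : p ∈ Set.Icc (0:ℝ) 1 := ⟨by linarith, le_of_lt hp1⟩
    have hQp : Qc p < 0 := by
      have := Qc_anti hps hpmem hpps
      rw [hQps] at this; linarith
    have h1p : 0 < 1 - p := by linarith
    have := mul_neg_of_pos_of_neg h1p hQp
    have := hg_eq p
    linarith
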